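/- The auxiliary r-uniform hypergraph on the vertex set of the q-bookpile H(q) of an r-vertex graph H, whose hyperedges are the vertex sets of the q^r standard copies of H, is isomorphic to H_q^r. -/

import Mathlib

/-- A graph together with a labelling of its vertices by the vertices of an
original `r`-vertex graph, and, for each `e ∈ [q]^r`, the embedding of the
standard copy of the original graph indexed by `e`. -/
structure LGraph (q r : ℕ) where
  β : Type
  G : SimpleGraph β
  lab : β → Fin r
  copy : (Fin r → Fin q) → Fin r → β

/-- Vertex set after taking the `q`-book along all copies of the vertex `i`. -/
def StepVerts {q r : ℕ} (X : LGraph q r) (i : Fin r) : Type :=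
  {b : X.β // X.lab b = i} ⊕ (Fin q × {b : X.β // X.lab b ≠ i})

/-- Embedding of the `j`-th page into the book along copies of `i`. -/
def stepEmb {q r : ℕ} (X : LGraph q r) (i : Fin r) (j : Fin q) (b : X.β) :
    StepVerts X i :=
  if h : X.lab b = i then Sum.inl ⟨b, h⟩ else Sum.inr (j, ⟨b, h⟩)

lemma stepEmb_injective {q r : ℕ} (X : LGraph q r) (i : Fin r) (j : Fin q) :
    Function.Injective (stepEmb X i j) := by
  intro a b hab
  unfold stepEmb StepVerts at hab
  split_ifs at hab with h1 h2 h2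
  · injection hab with h; exact congrArg Subtype.val h
  · injection hab with h; exact congrArg Subtype.val (congrArg Prod.snd h)

/-- One step of the bookpile construction: the `q`-book along all copies
of the vertex `i`. -/
def pileStep {q r : ℕ} (X : LGraph q r) (i : Fin r) : LGraph q r where
  β := StepVerts X i
  G := { Adj := fun a b => ∃ (j : Fin q) (u v : X.β),
            X.G.Adj u v ∧ a = stepEmb X i j u ∧ b = stepEmb X i j v
         symm := ⟨by rintro a b ⟨j, u, v, h, ha, hb⟩; exact ⟨j, v, u, h.symm, hb, ha⟩⟩
         loopless := ⟨by
           rintro a ⟨j, u, v, h, ha, hb⟩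
           exact X.G.loopless.irrefl v
             (by rwa [stepEmb_injective X i j (ha.symm.trans hb)] at h)⟩ }
  lab := Sum.elim (fun b => X.lab b.1) (fun p => X.lab p.2.1)
  copy := fun e v => stepEmb X i (e i) (X.copy e v)

/-- The `q`-bookpile `H(q)` of an `r`-vertex graph `H`: iterate the book
operation along the copies of each of the `r` vertices of `H`. -/
def bookpile {r : ℕ} (H : SimpleGraph (Fin r)) (q : ℕ) : LGraph q r :=
  (List.finRange r).foldl pileStep ⟨Fin r, H, id, fun _ v => v⟩

/-- Vertices of the hypergraph `H_q^r`: an `r`-tuple with exactly one entry `α`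
(whose position is the first component) and all other entries in `[q]`. -/
def HypVert (q r : ℕ) : Type := Σ i : Fin r, ({j : Fin r // j ≠ i} → Fin q)

/-- Incidence of `H_q^r`: the vertex `v` lies in the edge `e ∈ [q]^r` iff
substituting the `α`-bit of `v` by an element of `[q]` yields `e`. -/
def HypIncid {q r : ℕ} (v : HypVert q r) (e : Fin r → Fin q) : Prop :=
  ∀ j : {j : Fin r // j ≠ v.1}, v.2 j = e j.1

namespace BookpileAux

variable {q r : ℕ}

def Tt (q r : ℕ) (p : Fin r → Prop) (i : Fin r) : Type :=
  {j : Fin r // p j ∧ j ≠ i} → Fin q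

lemma Tt_congr {p : Fin r → Prop} {s t : Σ i : Fin r, Tt q r p i} (h : s = t)
    (j : Fin r) (h1 : p j ∧ j ≠ s.1) (h2 : p j ∧ j ≠ t.1) :
    s.2 ⟨j, h1⟩ = t.2 ⟨j, h2⟩ := by subst h; rfl

lemma Tt_ext {p : Fin r → Prop} {s t : Σ i : Fin r, Tt q r p i} (h1 : s.1 = t.1)
    (h2 : ∀ (j : Fin r) (hs : p j ∧ j ≠ s.1) (ht : p j ∧ j ≠ t.1),
      s.2 ⟨j, hs⟩ = t.2 ⟨j, ht⟩) : s = t := by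
  rcases s with ⟨i, f⟩; rcases t with ⟨i', f'⟩
  dsimp at h1 h2; subst h1
  exact congrArg (Sigma.mk i) (funext fun j => h2 j.1 j.2 j.2)

def Inv (p : Fin r → Prop) (X : LGraph q r) : Prop :=
  ∃ φ : X.β ≃ Σ i : Fin r, Tt q r p i,
    (∀ b, X.lab b = (φ b).1) ∧
    (∀ e v, φ (X.copy e v) = ⟨v, fun j => e j.1⟩)

lemma inv_congr {p p' : Fin r → Prop} (hp : ∀ j, p j ↔ p' j) {X : LGraph q r}
    (h : Inv p X) : Inv p' X := by
  have : p = p' := funext fun j => propext (hp j)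
  subst this; exact h

lemma inv_init (H : SimpleGraph (Fin r)) :
    Inv (q := q) (fun _ => False) ⟨Fin r, H, id, fun _ v => v⟩ :=
  ⟨⟨fun b => ⟨b, fun j => j.2.1.elim⟩, fun s => s.1,
    fun _ => rfl, fun s => Tt_ext rfl (fun _ hs _ => hs.1.elim)⟩,
    fun _ => rfl, fun _ v => Tt_ext rfl (fun _ hs _ => hs.1.elim)⟩

def stepFwd {p : Fin r → Prop} {X : LGraph q r} (a : Fin r)
    (φ : X.β ≃ Σ i : Fin r, Tt q r p i) (hlab : ∀ b, X.lab b = (φ b).1) :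
    StepVerts X a → Σ i : Fin r, Tt q r (fun j => p j ∨ j = a) i :=
  Sum.elim
    (fun b => ⟨a, fun j => (φ b.1).2 ⟨j.1,
      j.2.1.resolve_right j.2.2,
      fun hh => j.2.2 (hh.trans ((hlab b.1).symm.trans b.2))⟩⟩)
    (fun cb => ⟨(φ cb.2.1).1, fun j =>
      if hja : j.1 = a then cb.1
      else (φ cb.2.1).2 ⟨j.1, j.2.1.resolve_right hja, j.2.2⟩⟩)

def stepBwd {p : Fin r → Prop} {X : LGraph q r} (a : Fin r)
    (φ : X.β ≃ Σ i : Fin r, Tt q r p i) (hlab : ∀ b, X.lab b = (φ b).1) :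
    (Σ i : Fin r, Tt q r (fun j => p j ∨ j = a) i) → StepVerts X a :=
  fun s =>
  if hia : s.1 = a then
    Sum.inl ⟨φ.symm ⟨a, fun j => s.2 ⟨j.1, Or.inl j.2.1,
        fun hh => j.2.2 (hh.trans hia)⟩⟩,
      by rw [hlab, Equiv.apply_symm_apply]⟩
  else
    Sum.inr (s.2 ⟨a, Or.inr rfl, fun hh => hia hh.symm⟩,
      ⟨φ.symm ⟨s.1, fun j => s.2 ⟨j.1, Or.inl j.2.1, j.2.2⟩⟩,
        by rw [hlab, Equiv.apply_symm_apply]; exact hia⟩)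

lemma inv_step {p : Fin r → Prop} {X : LGraph q r} (a : Fin r) (hpa : ¬ p a)
    (h : Inv p X) : Inv (fun j => p j ∨ j = a) (pileStep X a) := by
  obtain ⟨φ, hlab, hcopy⟩ := h
  refine ⟨⟨stepFwd a φ hlab, stepBwd a φ hlab, ?_, ?_⟩, ?_, ?_⟩
  · rintro (⟨b, hb⟩ | ⟨c, b, hb⟩)
    · have h1 : (φ b).1 = a := (hlab b).symm.trans hb
      simp only [stepFwd, Sum.elim_inl, stepBwd]
      erw [dif_pos rfl]
      refine congrArg Sum.inl (Subtype.ext ?_)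
      rw [Equiv.symm_apply_eq]
      exact Tt_ext h1.symm (fun j hs ht => rfl)
    · have h1 : (φ b).1 ≠ a := fun hh => hb ((hlab b).trans hh)
      simp only [stepFwd, Sum.elim_inr, stepBwd]
      erw [dif_neg h1]
      refine congrArg Sum.inr (Prod.ext ?_ (Subtype.ext ?_))
      · dsimp only; exact dif_pos trivial
      · rw [Equiv.symm_apply_eq]
        refine Tt_ext rfl (fun j hs ht => ?_)
        have hja : j ≠ a := fun hh => hpa (hh ▸ hs.1)
        dsimp only
        rw [dif_neg hja]
  · rintro ⟨i, f⟩
    by_cases hia : i = a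
    · subst hia
      simp only [stepBwd]
      erw [dif_pos rfl]
      simp only [stepFwd, Sum.elim_inl]
      refine Tt_ext rfl (fun j hs ht => ?_)
      dsimp only
      exact Tt_congr (φ.apply_symm_apply _) j _ ⟨hs.1.resolve_right hs.2, hs.2⟩
    · simp only [stepBwd]
      erw [dif_neg hia]
      simp only [stepFwd, Sum.elim_inr]
      refine Tt_ext ?_ (fun j hs ht => ?_)
      · dsimp only; exact congrArg Sigma.fst (φ.apply_symm_apply _)
      dsimp only
      by_cases hja : j = a
      · rw [dif_pos hja]
        exact congrArg f (Subtype.ext hja.symm)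
      · rw [dif_neg hja]
        exact Tt_congr (φ.apply_symm_apply _) j _ ⟨hs.1.resolve_right hja, ht.2⟩
  · rintro (⟨b, hb⟩ | ⟨c, b, hb⟩)
    · exact hb
    · exact hlab b
  · intro e v
    show stepFwd a φ hlab (stepEmb X a (e a) (X.copy e v)) = _
    have hl : X.lab (X.copy e v) = v := by rw [hlab, hcopy]
    by_cases hva : v = a
    · erw [stepEmb, dif_pos (hl.trans hva)]
      simp only [stepFwd, Sum.elim_inl]
      refine Tt_ext hva.symm (fun j hs ht => ?_)
      dsimp only
      exact Tt_congr (hcopy e v) j _ ⟨hs.1.resolve_right hs.2, ht.2⟩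
    · erw [stepEmb, dif_neg (fun hh => hva (hl.symm.trans hh))]
      simp only [stepFwd, Sum.elim_inr]
      refine Tt_ext ?_ (fun j hs ht => ?_)
      · dsimp only; exact congrArg Sigma.fst (hcopy e v)
      dsimp only
      by_cases hja : j = a
      · rw [dif_pos hja]
        exact congrArg e hja.symm
      · rw [dif_neg hja]
        exact Tt_congr (hcopy e v) j _ ⟨hs.1.resolve_right hja, ht.2⟩

lemma inv_fold (X0 : LGraph q r) (h0 : Inv (fun _ => False) X0) :
    ∀ l : List (Fin r), l.Nodup → Inv (fun j => j ∈ l) (List.foldl pileStep X0 l) := by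
  intro l
  induction l using List.reverseRecOn with
  | nil =>
    intro _
    exact inv_congr (fun j => by simp) h0
  | append_singleton l a ih =>
    intro hnd
    rw [List.nodup_append] at hnd
    have hal : a ∉ l := by
      intro hal
      exact hnd.2.2 a hal a (by simp) rfl
    rw [List.foldl_append]
    have := inv_step a hal (ih hnd.1)
    exact inv_congr (fun j => by simp [or_comm, eq_comm]) this

end BookpileAux

open BookpileAux in
/-- the auxiliary `r`-uniform hypergraph on the vertex set of the
`q`-bookpile `H(q)` whose hyperedges are the vertex sets of the `q^r` standard
copies of `H` is isomorphic to `H_q^r`. -/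
theorem bookpile_aux_hypergraph_iso (r q : ℕ) (H : SimpleGraph (Fin r)) (hq : 0 < q) :
    ∃ φ : (bookpile H q).β ≃ HypVert q r,
      ∀ (b : (bookpile H q).β) (e : Fin r → Fin q),
        b ∈ Set.range ((bookpile H q).copy e) ↔ HypIncid (φ b) e := by
  obtain ⟨φ, hlab, hcopy⟩ :=
    inv_fold (q := q) (r := r) ⟨Fin r, H, id, fun _ v => v⟩ (inv_init H)
      (List.finRange r) (List.nodup_finRange r)
  have hcopy' : ∀ (e : Fin r → Fin q) (v : Fin r),
      φ ((bookpile H q).copy e v) = ⟨v, fun j => e j.1⟩ := hcopy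
  let ψ : (Σ i : Fin r, Tt q r (fun j => j ∈ List.finRange r) i) ≃ HypVert q r :=
    Equiv.sigmaCongrRight fun i =>
      Equiv.arrowCongr
        (Equiv.subtypeEquivRight fun j =>
          ⟨fun h => h.2, fun h => ⟨List.mem_finRange j, h⟩⟩)
        (Equiv.refl (Fin q))
  refine ⟨φ.trans ψ, fun b e => ?_⟩
  have hkey : ∀ v, (φ.trans ψ) ((bookpile H q).copy e v)
      = (⟨v, fun j => e j.1⟩ : HypVert q r) := by
    intro v
    show ψ (φ ((bookpile H q).copy e v)) = _
    rw [hcopy' e v]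
    rfl
  constructor
  · rintro ⟨v, rfl⟩
    have h2 : HypIncid (⟨v, fun j => e j.1⟩ : HypVert q r) e := fun j => rfl
    rwa [← hkey v] at h2
  · intro hin
    refine ⟨((φ.trans ψ) b).1, ?_⟩
    apply (φ.trans ψ).injective
    refine (hkey _).trans ?_
    refine Eq.symm ?_
    show ((φ.trans ψ) b : Σ i : Fin r, ({j : Fin r // j ≠ i} → Fin q))
      = ⟨((φ.trans ψ) b).1, fun j => e j.1⟩
    conv_lhs => rw [← Sigma.eta ((φ.trans ψ) b)]
    exact congrArg (Sigma.mk _) (funext fun j => hin j)
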